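/- Let r ≥ 8 be an even integer. Then every (r,r+1;6)-balanced biregular graph has order at least 2(r²+4), i.e., n_bb(r,r+1;6) ≥ 2r² + 8. -/

import Mathlib

open SimpleGraph Set

/-- The degree of a vertex, via the natural cardinality of its neighbor set. -/
noncomputable def deg {V : Type*} (G : SimpleGraph V) (v : V) : ℕ :=
  (G.neighborSet v).ncard

/-- Number of edges both of whose endpoints have degree `d`. -/
noncomputable def edgeCountDeg {V : Type*} (G : SimpleGraph V) (d : ℕ) : ℕ :=
  {e ∈ G.edgeSet | ∀ v ∈ e, deg G v = d}.ncard

/-- An `(r,s;g)`-balanced biregular graph: girth `g`, degree set exactly `{r, s}`,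
and equally many vertices of degree `r` as of degree `s`. -/
def IsBabi {V : Type*} (r s g : ℕ) (G : SimpleGraph V) : Prop :=
  G.girth = g ∧ (∀ v, deg G v = r ∨ deg G v = s) ∧
  (∃ v, deg G v = r) ∧ (∃ v, deg G v = s) ∧
  {v | deg G v = r}.ncard = {v | deg G v = s}.ncard

open Finset
set_option linter.unusedSectionVars false
set_option maxHeartbeats 1000000

variable {V : Type*} {G : SimpleGraph V}

lemma cycle_ge (hg : G.girth = 6) {a : V} (w : G.Walk a a) (hw : w.IsCycle) :
    6 ≤ w.length := by
  have hne : G.egirth ≠ ⊤ := by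
    intro h; rw [SimpleGraph.girth, h] at hg; simp at hg
  have he : G.egirth = 6 := by
    rw [SimpleGraph.girth] at hg
    exact (ENat.toNat_eq_iff (by norm_num)).mp hg
  have := SimpleGraph.le_egirth.mp he.ge a w hw
  exact_mod_cast this

lemma no_c3 (hg : G.girth = 6) {a b c : V} (h1 : G.Adj a b) (h2 : G.Adj b c)
    (h3 : G.Adj c a) : False := by
  have hw : (Walk.cons h1 (Walk.cons h2 (Walk.cons h3 Walk.nil))).IsCycle := by
    simp [Walk.isCycle_def, Walk.isTrail_def, List.Nodup, Sym2.eq_iff]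
    aesop
  have := cycle_ge hg _ hw
  simp at this

lemma no_c4 (hg : G.girth = 6) {a b c d : V} (h1 : G.Adj a b) (h2 : G.Adj b c)
    (h3 : G.Adj c d) (h4 : G.Adj d a) (hac : a ≠ c) (hbd : b ≠ d) : False := by
  have hw : (Walk.cons h1 (Walk.cons h2 (Walk.cons h3 (Walk.cons h4 Walk.nil)))).IsCycle := by
    simp [Walk.isCycle_def, Walk.isTrail_def, List.Nodup, Sym2.eq_iff]
    aesop
  have := cycle_ge hg _ hw
  simp at this

lemma no_c5 (hg : G.girth = 6) {a b c d e : V} (h1 : G.Adj a b) (h2 : G.Adj b c)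
    (h3 : G.Adj c d) (h4 : G.Adj d e) (h5 : G.Adj e a)
    (hac : a ≠ c) (had : a ≠ d) (hbd : b ≠ d) (hbe : b ≠ e) (hce : c ≠ e) : False := by
  have hw : (Walk.cons h1 (Walk.cons h2 (Walk.cons h3 (Walk.cons h4 (Walk.cons h5 Walk.nil))))).IsCycle := by
    simp [Walk.isCycle_def, Walk.isTrail_def, List.Nodup, Sym2.eq_iff]
    aesop
  have := cycle_ge hg _ hw
  simp at this
section
variable {V : Type*} [Fintype V] [DecidableEq V] (G : SimpleGraph V) [DecidableRel G.Adj]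

def dvert (d : ℕ) : Finset V := Finset.univ.filter fun v => G.degree v = d

def Pp (d e : ℕ) : Finset (V × V) :=
  Finset.univ.filter fun p : V × V => G.Adj p.1 p.2 ∧ G.degree p.1 = d ∧ G.degree p.2 = e

variable {G}

lemma tree_lemma {r : ℕ} (hg : G.girth = 6)
    (hdeg : ∀ v, G.degree v = r ∨ G.degree v = r + 1)
    {u v : V} (huv : G.Adj u v) (hu : G.degree u = r + 1) (hv : G.degree v = r + 1) :
    ∃ A B Ssum : ℕ,
      A + B = 2 * r ∧
      (G.neighborFinset u ∩ dvert G (r+1)).card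
        + (G.neighborFinset v ∩ dvert G (r+1)).card = A + 2 ∧
      2 + 2 * r + (B * (r - 1) + A * r) ≤ Fintype.card V ∧
      Ssum + 2 + A ≤ (dvert G (r+1)).card ∧
      2 * (B * (r - 1)) ≤ (Pp G r r).card + 2 * Ssum := by
  classical
  set R : Finset V := dvert G r with hR
  set S : Finset V := dvert G (r+1) with hS
  set S1 : Finset V := (G.neighborFinset u ∪ G.neighborFinset v) \ {u, v} with hS1
  set X : Finset V := insert u (insert v S1) with hX
  set C : V → Finset V := fun w => G.neighborFinset w \ X with hC
  have hRS : ∀ x, x ∈ R ∨ x ∈ S := by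
    intro x; simp only [hR, hS, dvert, Finset.mem_filter, Finset.mem_univ, true_and]
    exact hdeg x
  have hRSdisj : ∀ x, x ∈ R → x ∈ S → False := by
    intro x hx1 hx2
    simp only [hR, hS, dvert, Finset.mem_filter, Finset.mem_univ, true_and] at hx1 hx2
    omega
  have hune : u ≠ v := huv.ne
  have hdisjN : Disjoint (G.neighborFinset u) (G.neighborFinset v) := by
    rw [Finset.disjoint_left]
    intro w hw1 hw2
    rw [SimpleGraph.mem_neighborFinset] at hw1 hw2
    exact no_c3 hg huv hw2 hw1.symm
  have hS1mem : ∀ w, w ∈ S1 ↔ ((G.Adj u w ∨ G.Adj v w) ∧ w ≠ u ∧ w ≠ v) := by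
    intro w
    simp only [hS1, Finset.mem_sdiff, Finset.mem_union, SimpleGraph.mem_neighborFinset,
      Finset.mem_insert, Finset.mem_singleton]
    tauto
  have huS1 : u ∉ S1 := by rw [hS1mem]; tauto
  have hvS1 : v ∉ S1 := by rw [hS1mem]; tauto
  have hS1card : S1.card = 2 * r := by
    rw [hS1, Finset.card_sdiff_of_subset]
    · rw [Finset.card_union_of_disjoint hdisjN]
      rw [SimpleGraph.card_neighborFinset_eq_degree, SimpleGraph.card_neighborFinset_eq_degree,
        hu, hv, Finset.card_insert_of_notMem (by simp [hune]), Finset.card_singleton]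
      omega
    · intro x hx
      simp only [Finset.mem_insert, Finset.mem_singleton] at hx
      rcases hx with rfl | rfl
      · simp [huv.symm]
      · simp [huv]
  have hadjS1 : ∀ w ∈ S1, ∀ w' ∈ S1, ¬ G.Adj w w' := by
    intro w hw w' hw' hadj
    rw [hS1mem] at hw hw'
    obtain ⟨hw1, hwu, hwv⟩ := hw
    obtain ⟨hw'1, hw'u, hw'v⟩ := hw'
    rcases hw1 with h1 | h1 <;> rcases hw'1 with h2 | h2
    · exact no_c3 hg h1 hadj h2.symm
    · exact no_c4 hg h1 hadj h2.symm huv.symm (Ne.symm hw'u) hwv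
    · exact no_c4 hg h1 hadj h2.symm huv (Ne.symm hw'v) hwu
    · exact no_c3 hg h1 hadj h2.symm
  have hNX : ∀ w ∈ S1, (G.neighborFinset w ∩ X).card ≤ 1 := by
    intro w hw
    rw [Finset.card_le_one]
    intro a ha b hb
    simp only [Finset.mem_inter, SimpleGraph.mem_neighborFinset, hX, Finset.mem_insert] at ha hb
    have key : ∀ c, G.Adj w c → (c = u ∨ c = v ∨ c ∈ S1) → c = u ∨ c = v := by
      intro c hc hcm
      rcases hcm with rfl | rfl | hcs
      · exact Or.inl rfl
      · exact Or.inr rfl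
      · exact absurd hc (hadjS1 w hw c hcs)
    have ha' := key a ha.1 ha.2
    have hb' := key b hb.1 hb.2
    have hwu : G.Adj w u → G.Adj w v → False := by
      intro h1 h2
      exact no_c3 hg huv h2.symm h1
    rcases ha' with rfl | rfl <;> rcases hb' with rfl | rfl
    · rfl
    · exact (hwu ha.1 hb.1).elim
    · exact (hwu hb.1 ha.1).elim
    · rfl
  have hCcard : ∀ w ∈ S1, G.degree w ≤ (C w).card + 1 := by
    intro w hw
    have h1 : (C w).card + (G.neighborFinset w ∩ X).card = G.degree w := by
      rw [hC]
      rw [Finset.card_sdiff_add_card_inter, SimpleGraph.card_neighborFinset_eq_degree]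
    have := hNX w hw
    omega
  have hCX : ∀ w, Disjoint (C w) X := by
    intro w
    rw [hC]
    exact Finset.sdiff_disjoint
  have hCdisj : ∀ w ∈ S1, ∀ w' ∈ S1, w ≠ w' → Disjoint (C w) (C w') := by
    intro w hw w' hw' hne
    rw [Finset.disjoint_left]
    intro x hx hx'
    have hxX : x ∉ X := (Finset.disjoint_left.mp (hCX w)) hx
    have hadjwx : G.Adj w x := by
      have := hx; rw [hC, Finset.mem_sdiff, SimpleGraph.mem_neighborFinset] at this; exact this.1
    have hadjw'x : G.Adj w' x := by
      have := hx'; rw [hC, Finset.mem_sdiff, SimpleGraph.mem_neighborFinset] at this; exact this.1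
    have hxu : x ≠ u := by rintro rfl; exact hxX (by simp [hX])
    have hxv : x ≠ v := by rintro rfl; exact hxX (by simp [hX])
    have hxS1 : x ∉ S1 := fun hmem => hxX (by simp [hX, hmem])
    rw [hS1mem] at hw hw'
    obtain ⟨hw1, hwu, hwv⟩ := hw
    obtain ⟨hw'1, hw'u, hw'v⟩ := hw'
    rcases hw1 with h1 | h1 <;> rcases hw'1 with h2 | h2
    · exact no_c4 hg h1 hadjwx hadjw'x.symm h2.symm (Ne.symm hxu) hne
    · exact no_c5 hg h1 hadjwx hadjw'x.symm h2.symm huv.symm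
        (Ne.symm hxu) (Ne.symm hw'u) hne hwv hxv
    · exact no_c5 hg h1 hadjwx hadjw'x.symm h2.symm huv
        (Ne.symm hxv) (Ne.symm hw'v) hne hwu hxu
    · exact no_c4 hg h1 hadjwx hadjw'x.symm h2.symm (Ne.symm hxv) hne
  have hsplit : ∀ T : Finset V, (T ∩ S).card + (T ∩ R).card = T.card := by
    intro T
    have hdisj2 : Disjoint (T ∩ S) (T ∩ R) := by
      rw [Finset.disjoint_left]; intro x hx hx'
      exact hRSdisj x (Finset.mem_inter.mp hx').2 (Finset.mem_inter.mp hx).2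
    rw [← Finset.card_union_of_disjoint hdisj2]
    congr 1
    ext x
    simp only [Finset.mem_union, Finset.mem_inter]
    constructor
    · tauto
    · intro hx
      rcases hRS x with h | h
      · exact Or.inr ⟨hx, h⟩
      · exact Or.inl ⟨hx, h⟩
  have hTsplit : ∀ T : Finset V, (T ∩ S) ∪ (T ∩ R) = T := by
    intro T
    ext x
    simp only [Finset.mem_union, Finset.mem_inter]
    constructor
    · tauto
    · intro hx
      rcases hRS x with h | h
      · exact Or.inr ⟨hx, h⟩
      · exact Or.inl ⟨hx, h⟩
  have hSTdisj : ∀ T : Finset V, Disjoint (T ∩ S) (T ∩ R) := by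
    intro T
    rw [Finset.disjoint_left]; intro x hx hx'
    exact hRSdisj x (Finset.mem_inter.mp hx').2 (Finset.mem_inter.mp hx).2
  have huS : u ∈ S := by simp [hS, dvert, hu]
  have hvS : v ∈ S := by simp [hS, dvert, hv]
  refine ⟨(S1 ∩ S).card, (S1 ∩ R).card, ∑ w ∈ S1 ∩ R, (C w ∩ S).card, ?_, ?_, ?_, ?_, ?_⟩
  · rw [hsplit S1, hS1card]
  · -- A + 2 = dS u + dS v
    have hvmem : v ∈ G.neighborFinset u ∩ S := by
      simp only [Finset.mem_inter, SimpleGraph.mem_neighborFinset]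
      exact ⟨huv, hvS⟩
    have humem : u ∈ G.neighborFinset v ∩ S := by
      simp only [Finset.mem_inter, SimpleGraph.mem_neighborFinset]
      exact ⟨huv.symm, huS⟩
    have hS1S : S1 ∩ S = ((G.neighborFinset u ∩ S) ∪ (G.neighborFinset v ∩ S)) \ {u, v} := by
      ext x
      simp only [Finset.mem_inter, Finset.mem_sdiff, Finset.mem_union, Finset.mem_insert,
        Finset.mem_singleton, hS1, SimpleGraph.mem_neighborFinset]
      tauto
    have hsubuv : ({u, v} : Finset V) ⊆ (G.neighborFinset u ∩ S) ∪ (G.neighborFinset v ∩ S) := by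
      intro x hx
      simp only [Finset.mem_insert, Finset.mem_singleton] at hx
      rcases hx with rfl | rfl
      · exact Finset.mem_union_right _ humem
      · exact Finset.mem_union_left _ hvmem
    have hdisj3 : Disjoint (G.neighborFinset u ∩ S) (G.neighborFinset v ∩ S) :=
      hdisjN.mono Finset.inter_subset_left Finset.inter_subset_left
    have h1 : (S1 ∩ S).card
        = (G.neighborFinset u ∩ S).card + (G.neighborFinset v ∩ S).card - 2 := by
      rw [hS1S, Finset.card_sdiff_of_subset hsubuv, Finset.card_union_of_disjoint hdisj3]
      congr 1
      rw [Finset.card_insert_of_notMem (by simp [hune]), Finset.card_singleton]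
    have h2 : 2 ≤ (G.neighborFinset u ∩ S).card + (G.neighborFinset v ∩ S).card := by
      have := Finset.card_le_card hsubuv
      rw [Finset.card_union_of_disjoint hdisj3] at this
      simpa [Finset.card_insert_of_notMem (by simp [hune] : u ∉ ({v} : Finset V))] using this
    rw [hR, hS] at *
    omega
  · -- Moore bound
    have hXcard : X.card = 2 + S1.card := by
      rw [hX, Finset.card_insert_of_notMem (by simp [hune, huS1]),
        Finset.card_insert_of_notMem hvS1]
      omega
    have hXdisjB : Disjoint X (S1.biUnion C) := by
      rw [Finset.disjoint_biUnion_right]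
      exact fun w _ => (hCX w).symm
    have hcardB : (S1.biUnion C).card = ∑ w ∈ S1, (C w).card :=
      Finset.card_biUnion (fun w hw w' hw' hne => hCdisj w hw w' hw' hne)
    have hbig : X.card + ∑ w ∈ S1, (C w).card ≤ Fintype.card V := by
      rw [← hcardB, ← Finset.card_union_of_disjoint hXdisjB]
      exact Finset.card_le_univ _
    have hsum_split : ∑ w ∈ S1, (C w).card
        = ∑ w ∈ S1 ∩ S, (C w).card + ∑ w ∈ S1 ∩ R, (C w).card := by
      rw [← Finset.sum_union (hSTdisj S1), hTsplit S1]
    have hb1 : (S1 ∩ R).card * (r - 1) ≤ ∑ w ∈ S1 ∩ R, (C w).card := by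
      have := Finset.card_nsmul_le_sum (S1 ∩ R) (fun w => (C w).card) (r - 1) ?_
      · simpa using this
      · intro w hw
        have hwS1 : w ∈ S1 := (Finset.mem_inter.mp hw).1
        have hwR : G.degree w = r := by
          have := (Finset.mem_inter.mp hw).2
          simpa [hR, dvert] using this
        have := hCcard w hwS1
        show r - 1 ≤ (C w).card
        omega
    have hb2 : (S1 ∩ S).card * r ≤ ∑ w ∈ S1 ∩ S, (C w).card := by
      have := Finset.card_nsmul_le_sum (S1 ∩ S) (fun w => (C w).card) r ?_
      · simpa using this
      · intro w hw
        have hwS1 : w ∈ S1 := (Finset.mem_inter.mp hw).1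
        have hwS : G.degree w = r + 1 := by
          have := (Finset.mem_inter.mp hw).2
          simpa [hS, dvert] using this
        have := hCcard w hwS1
        show r ≤ (C w).card
        omega
    rw [hXcard, hS1card] at hbig
    linarith
  · -- Ssum + 2 + A ≤ S.card
    set Y : Finset V := insert u (insert v (S1 ∩ S)) ∪ (S1 ∩ R).biUnion (fun w => C w ∩ S)
      with hY
    have hYsub : Y ⊆ S := by
      intro x hx
      rw [hY] at hx
      simp only [Finset.mem_union, Finset.mem_insert, Finset.mem_biUnion] at hx
      rcases hx with (rfl | rfl | hx) | ⟨w, _, hx⟩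
      · exact huS
      · exact hvS
      · exact (Finset.mem_inter.mp hx).2
      · exact (Finset.mem_inter.mp hx).2
    have hins_sub_X : insert u (insert v (S1 ∩ S)) ⊆ X := by
      intro x hx
      simp only [Finset.mem_insert] at hx
      rcases hx with rfl | rfl | hx
      · simp [hX]
      · simp [hX]
      · simp [hX, Finset.mem_insert]
        right; right; exact (Finset.mem_inter.mp hx).1
    have hYdisj : Disjoint (insert u (insert v (S1 ∩ S))) ((S1 ∩ R).biUnion (fun w => C w ∩ S)) := by
      rw [Finset.disjoint_biUnion_right]
      intro w _
      exact ((hCX w).mono_left Finset.inter_subset_left).symm.mono_left hins_sub_X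
    have hYcard : Y.card = (2 + (S1 ∩ S).card) + ∑ w ∈ S1 ∩ R, (C w ∩ S).card := by
      rw [hY, Finset.card_union_of_disjoint hYdisj]
      congr 1
      · have h1 : v ∉ S1 ∩ S := fun hmem => hvS1 (Finset.mem_inter.mp hmem).1
        have h2 : u ∉ insert v (S1 ∩ S) := by
          simp only [Finset.mem_insert]
          rintro (rfl | hmem)
          · exact hune rfl
          · exact huS1 (Finset.mem_inter.mp hmem).1
        rw [Finset.card_insert_of_notMem h2, Finset.card_insert_of_notMem h1]
        omega
      · refine Finset.card_biUnion ?_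
        intro w hw w' hw' hne
        exact (hCdisj w (Finset.mem_inter.mp hw).1 w' (Finset.mem_inter.mp hw').1 hne).mono
          Finset.inter_subset_left Finset.inter_subset_left
    have := Finset.card_le_card hYsub
    rw [hYcard] at this
    omega
  · -- thin pairs bound
    set Q1 : Finset (V × V) := (S1 ∩ R).biUnion (fun w => (C w ∩ R).image (fun x => (w, x)))
      with hQ1
    have hQ1card : Q1.card = ∑ w ∈ S1 ∩ R, (C w ∩ R).card := by
      rw [hQ1]
      rw [Finset.card_biUnion]
      · refine Finset.sum_congr rfl fun w _ => ?_
        exact Finset.card_image_of_injective _ (fun a b hab => (Prod.mk.injEq _ _ _ _).mp hab |>.2)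
      · intro w _ w' _ hne
        rw [Function.onFun, Finset.disjoint_left]
        rintro p hp hp'
        simp only [Finset.mem_image] at hp hp'
        obtain ⟨x, _, rfl⟩ := hp
        obtain ⟨x', _, heq⟩ := hp'
        exact hne ((Prod.mk.injEq _ _ _ _).mp heq).1.symm
    have hQ2card : (Q1.image Prod.swap).card = Q1.card :=
      Finset.card_image_of_injective _ Prod.swap_injective
    have hQ1mem : ∀ p ∈ Q1, p.1 ∈ S1 ∧ p.1 ∈ R ∧ p.2 ∈ C p.1 ∧ p.2 ∈ R := by
      intro p hp
      rw [hQ1] at hp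
      simp only [Finset.mem_biUnion, Finset.mem_image, Finset.mem_inter] at hp
      obtain ⟨w, ⟨hw1, hw2⟩, x, ⟨hx1, hx2⟩, rfl⟩ := hp
      exact ⟨hw1, hw2, hx1, hx2⟩
    have hdegR : ∀ x, x ∈ R → G.degree x = r := by
      intro x hx; simpa [hR, dvert] using hx
    have hCadj : ∀ w x, x ∈ C w → G.Adj w x := by
      intro w x hx
      rw [hC] at hx
      exact (SimpleGraph.mem_neighborFinset _ _ _).mp (Finset.mem_sdiff.mp hx).1
    have hQsub : Q1 ∪ Q1.image Prod.swap ⊆ Pp G r r := by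
      intro p hp
      rw [Finset.mem_union] at hp
      simp only [Pp, Finset.mem_filter, Finset.mem_univ, true_and]
      rcases hp with hp | hp
      · obtain ⟨h1, h2, h3, h4⟩ := hQ1mem p hp
        exact ⟨hCadj _ _ h3, hdegR _ h2, hdegR _ h4⟩
      · rw [Finset.mem_image] at hp
        obtain ⟨q, hq, rfl⟩ := hp
        obtain ⟨h1, h2, h3, h4⟩ := hQ1mem q hq
        exact ⟨(hCadj _ _ h3).symm, hdegR _ h4, hdegR _ h2⟩
    have hQdisj : Disjoint Q1 (Q1.image Prod.swap) := by
      rw [Finset.disjoint_left]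
      intro p hp hp'
      have h1 : p.1 ∈ S1 := (hQ1mem p hp).1
      rw [Finset.mem_image] at hp'
      obtain ⟨q, hq, heq⟩ := hp'
      have h3 : q.2 ∈ C q.1 := (hQ1mem q hq).2.2.1
      have : q.2 ∉ X := (Finset.disjoint_left.mp (hCX q.1)) h3
      apply this
      have hpq : p.1 = q.2 := by rw [← heq]; rfl
      rw [← hpq]
      simp [hX, h1]
    have hcard_le : Q1.card + (Q1.image Prod.swap).card ≤ (Pp G r r).card := by
      rw [← Finset.card_union_of_disjoint hQdisj]
      exact Finset.card_le_card hQsub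
    have hb : (S1 ∩ R).card * (r - 1)
        ≤ ∑ w ∈ S1 ∩ R, (C w ∩ R).card + ∑ w ∈ S1 ∩ R, (C w ∩ S).card := by
      rw [← Finset.sum_add_distrib]
      have := Finset.card_nsmul_le_sum (S1 ∩ R) (fun w => (C w ∩ R).card + (C w ∩ S).card)
        (r - 1) ?_
      · simpa using this
      · intro w hw
        have hwS1 : w ∈ S1 := (Finset.mem_inter.mp hw).1
        have hwR : G.degree w = r := by
          have := (Finset.mem_inter.mp hw).2
          simpa [hR, dvert] using this
        have h1 := hCcard w hwS1
        have h2 := hsplit (C w)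
        show r - 1 ≤ (C w ∩ R).card + (C w ∩ S).card
        omega
    rw [hQ2card, hQ1card] at hcard_le
    linarith



lemma pairCard (P : V → V → Prop) [∀ v w, Decidable (P v w)] :
    (Finset.univ.filter fun p : V × V => P p.1 p.2).card
      = ∑ v, (Finset.univ.filter fun w => P v w).card := by
  rw [Finset.card_filter, Fintype.sum_prod_type]
  simp only [Finset.card_filter]

lemma pairSum (P : V → V → Prop) [∀ v w, Decidable (P v w)] (g : V × V → ℕ) :
    ∑ p ∈ (Finset.univ.filter fun p : V × V => P p.1 p.2), g p
      = ∑ v, ∑ w ∈ Finset.univ.filter fun w => P v w, g (v, w) := by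
  rw [Finset.sum_filter, Fintype.sum_prod_type]
  simp only [Finset.sum_filter]

lemma Pp_card (d e : ℕ) :
    (Pp G d e).card = ∑ v ∈ dvert G d, (G.neighborFinset v ∩ dvert G e).card := by
  rw [Pp, pairCard (P := fun v w => G.Adj v w ∧ G.degree v = d ∧ G.degree w = e)]
  rw [← Finset.sum_subset (Finset.subset_univ (dvert G d))]
  · exact Finset.sum_congr rfl fun v hv => by
      congr 1
      ext w
      simp only [dvert, Finset.mem_filter, Finset.mem_univ, true_and,
        Finset.mem_inter, SimpleGraph.mem_neighborFinset] at hv ⊢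
      tauto
  · intro v _ hv
    simp only [dvert, Finset.mem_filter, Finset.mem_univ, true_and] at hv
    rw [Finset.card_eq_zero, Finset.filter_eq_empty_iff]
    intro w _
    tauto

lemma Pp_swap (d e : ℕ) : (Pp G d e).card = (Pp G e d).card := by
  apply Finset.card_bij' (fun p _ => p.swap) (fun p _ => p.swap) <;>
    simp only [Pp, Finset.mem_filter, Finset.mem_univ, true_and, Prod.fst_swap,
      Prod.snd_swap, Prod.swap_swap, and_true, implies_true] <;>
    intro p hp <;>
    exact ⟨hp.1.symm, hp.2.2, hp.2.1⟩

lemma Pp_sum_fst (d : ℕ) (f : V → ℕ) :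
    ∑ p ∈ Pp G d d, f p.1 = ∑ v ∈ dvert G d, (G.neighborFinset v ∩ dvert G d).card * f v := by
  rw [Pp, pairSum (P := fun v w => G.Adj v w ∧ G.degree v = d ∧ G.degree w = d)]
  rw [← Finset.sum_subset (Finset.subset_univ (dvert G d))]
  · refine Finset.sum_congr rfl fun v hv => ?_
    have hfilter : (Finset.univ.filter fun w => G.Adj v w ∧ G.degree v = d ∧ G.degree w = d)
        = G.neighborFinset v ∩ dvert G d := by
      ext w
      simp only [dvert, Finset.mem_filter, Finset.mem_univ, true_and,
        Finset.mem_inter, SimpleGraph.mem_neighborFinset] at hv ⊢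
      tauto
    rw [hfilter]
    simp [Finset.sum_const, mul_comm]
  · intro v _ hv
    simp only [dvert, Finset.mem_filter, Finset.mem_univ, true_and] at hv
    have hfilter : (Finset.univ.filter fun w => G.Adj v w ∧ G.degree v = d ∧ G.degree w = d)
        = ∅ := by
      rw [Finset.filter_eq_empty_iff]; intro w _; tauto
    rw [hfilter, Finset.sum_empty]

lemma Pp_sum_snd (d : ℕ) (f : V → ℕ) :
    ∑ p ∈ Pp G d d, f p.2 = ∑ p ∈ Pp G d d, f p.1 := by
  apply Finset.sum_nbij' (fun p => p.swap) (fun p => p.swap) <;>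
    simp only [Pp, Finset.mem_filter, Finset.mem_univ, true_and, Prod.fst_swap,
      Prod.snd_swap, Prod.swap_swap, and_true, implies_true] <;>
    intro p hp
  · exact ⟨hp.1.symm, hp.2.2, hp.2.1⟩
  · exact ⟨hp.1.symm, hp.2.2, hp.2.1⟩

lemma Pp_split {r : ℕ} (hdeg : ∀ v, G.degree v = r ∨ G.degree v = r + 1) (d : ℕ) :
    (Pp G d r).card + (Pp G d (r+1)).card = d * (dvert G d).card := by
  rw [Pp_card, Pp_card, ← Finset.sum_add_distrib]
  have hterm : ∀ v ∈ dvert G d,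
      (G.neighborFinset v ∩ dvert G r).card + (G.neighborFinset v ∩ dvert G (r+1)).card = d := by
    intro v hv
    have hdv : G.degree v = d := by simpa [dvert] using hv
    have hdisj : Disjoint (G.neighborFinset v ∩ dvert G r) (G.neighborFinset v ∩ dvert G (r+1)) := by
      rw [Finset.disjoint_left]
      intro x hx hx'
      simp only [Finset.mem_inter, dvert, Finset.mem_filter, Finset.mem_univ, true_and] at hx hx'
      omega
    have hun : (G.neighborFinset v ∩ dvert G r) ∪ (G.neighborFinset v ∩ dvert G (r+1))
        = G.neighborFinset v := by
      ext x
      simp only [Finset.mem_union, Finset.mem_inter, dvert, Finset.mem_filter,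
        Finset.mem_univ, true_and]
      constructor
      · tauto
      · intro hx
        rcases hdeg x with h | h
        · exact Or.inl ⟨hx, h⟩
        · exact Or.inr ⟨hx, h⟩
    rw [← Finset.card_union_of_disjoint hdisj, hun,
      SimpleGraph.card_neighborFinset_eq_degree, hdv]
  rw [Finset.sum_congr rfl hterm, Finset.sum_const, smul_eq_mul, mul_comm]



end


lemma deg_eq' {V : Type*} [Fintype V] (G : SimpleGraph V) [DecidableRel G.Adj] (v : V) :
    deg G v = G.degree v := by
  rw [deg, SimpleGraph.degree, SimpleGraph.neighborFinset, Set.ncard_eq_toFinset_card']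

/-- for even `r ≥ 8`, every `(r,r+1;6)`-babi-graph has order at
least `2(r² + 4)`. -/
theorem stmt_18 (r : ℕ) (hr : 8 ≤ r) (hre : Even r)
    (n : ℕ) (G : SimpleGraph (Fin n)) (h : IsBabi r (r + 1) 6 G) :
    2 * (r ^ 2 + 4) ≤ n := by
  classical
  obtain ⟨r', rfl⟩ : ∃ r', r = r' + 1 := ⟨r - 1, by omega⟩
  set r := r' + 1 with hrdef
  have hr' : 7 ≤ r' := by omega
  obtain ⟨hg, hdeg0, hex1, hex2, hbal⟩ := h
  have hdeg : ∀ v, G.degree v = r ∨ G.degree v = r + 1 := by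
    intro v
    rw [← deg_eq']
    exact hdeg0 v
  set R : Finset (Fin n) := dvert G r with hRdef
  set S : Finset (Fin n) := dvert G (r + 1) with hSdef
  have hsetR : {v | deg G v = r} = ↑R := by
    ext v; simp [hRdef, dvert, deg_eq']
  have hsetS : {v | deg G v = r + 1} = ↑S := by
    ext v; simp [hSdef, dvert, deg_eq']
  rw [hsetR, hsetS, Set.ncard_coe_finset, Set.ncard_coe_finset] at hbal
  set k : ℕ := S.card with hkdef
  -- n = R.card + S.card
  have hRSunion : R ∪ S = Finset.univ := by
    ext v
    simp only [Finset.mem_union, hRdef, hSdef, dvert, Finset.mem_filter, Finset.mem_univ,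
      true_and, iff_true]
    exact hdeg v
  have hRSdisj : Disjoint R S := by
    rw [Finset.disjoint_left]
    intro x hx hx'
    simp only [hRdef, hSdef, dvert, Finset.mem_filter, Finset.mem_univ, true_and] at hx hx'
    omega
  have hn : k + k = n := by
    have := Finset.card_union_of_disjoint hRSdisj
    rw [hRSunion, Finset.card_univ, Fintype.card_fin] at this
    omega
  have hk0 : 0 < k := by
    obtain ⟨v, hv⟩ := hex2
    have : v ∈ S := by simp [hSdef, dvert, ← deg_eq', hv]
    have := Finset.card_pos.mpr ⟨v, this⟩
    omega
  -- pair counts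
  set q := (Pp G r r).card with hqdef
  set p := (Pp G (r + 1) (r + 1)).card with hpdef
  set m := (Pp G r (r + 1)).card with hmdef
  have hsplit1 : q + m = r * k := by
    have h := Pp_split hdeg r
    have hc : (dvert G r).card = k := by rw [← hRdef]; exact hbal
    rw [hc] at h
    exact h
  have hsplit2 : (Pp G (r+1) r).card + p = (r + 1) * k := Pp_split hdeg (r + 1)
  have hmswap : (Pp G (r+1) r).card = m := Pp_swap (r + 1) r
  have hrk : (r + 1) * k = r * k + k := by ring
  have hpq : p = q + k := by
    rw [hmswap] at hsplit2
    omega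
  -- evenness of k
  have hkeven : Even k := by
    have hhs := SimpleGraph.sum_degrees_eq_twice_card_edges G
    have hsum : ∑ v, G.degree v = r * k + (r + 1) * k := by
      rw [← hRSunion, Finset.sum_union hRSdisj]
      congr 1
      · rw [Finset.sum_congr rfl (fun v hv => by
          simpa [hRdef, dvert] using hv), Finset.sum_const, smul_eq_mul, hbal, mul_comm]
      · rw [Finset.sum_congr rfl (fun v hv => by
          simpa [hSdef, dvert] using hv), Finset.sum_const, smul_eq_mul, mul_comm]
    have heven2 : Even ((2 * r + 1) * k) := by
      have he : (2 * r + 1) * k = 2 * G.edgeFinset.card := by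
        rw [show (2 * r + 1) * k = r * k + (r + 1) * k by ring, ← hsum, hhs]
      exact ⟨G.edgeFinset.card, by omega⟩
    rcases Nat.even_mul.mp heven2 with h | h
    · exfalso; rcases h with ⟨c, hc⟩; omega
    · exact h
  by_contra hcon
  push_neg at hcon
  -- n ≤ 2r^2+4, k ≤ r^2+2
  have hrsq_even : Even (r ^ 2) := by
    obtain ⟨t, ht⟩ := hre
    exact ⟨t * r, by rw [pow_two, ht]; ring⟩
  have hkle : k ≤ r ^ 2 + 2 := by
    obtain ⟨a, ha⟩ := hkeven
    obtain ⟨b, hb⟩ := hrsq_even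
    omega
  -- fat pair exists
  have hp0 : 0 < p := by omega
  obtain ⟨pr, hpr⟩ := Finset.card_pos.mp (hpdef ▸ hp0)
  obtain ⟨u, v⟩ := pr
  simp only [Pp, Finset.mem_filter, Finset.mem_univ, true_and] at hpr
  obtain ⟨huv, hu, hv⟩ := hpr
  -- key bound for every fat pair
  have key : ∀ a b : Fin n, G.Adj a b → G.degree a = r + 1 → G.degree b = r + 1 →
      (G.neighborFinset a ∩ S).card + (G.neighborFinset b ∩ S).card ≤ 4 := by
    intro a b hab ha hb
    obtain ⟨A, B, Ssum, h1, h2, h3, h4, h5⟩ := tree_lemma hg hdeg hab ha hb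
    rw [Fintype.card_fin] at h3
    rw [← hSdef] at h2
    have hr1 : r - 1 = r' := by omega
    rw [hr1] at h3
    have hBr : B * r' + A * r = (A + B) * r' + A := by rw [hrdef]; ring
    rw [h1] at hBr
    have hprod : 2 * r * r' + A + 2 + 2 * r ≤ n := by
      rw [hBr] at h3
      linarith
    have hn4 : n ≤ 2 * r ^ 2 + 4 := by omega
    have hsq : r ^ 2 = r * r' + r := by rw [hrdef]; ring
    have hA2 : A ≤ 2 := by
      rw [hsq] at hn4
      have h2rr : 2 * r * r' = 2 * (r * r') := by ring
      rw [h2rr] at hprod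
      linarith
    omega
  -- Cauchy-Schwarz / averaging
  set dS : Fin n → ℕ := fun v => (G.neighborFinset v ∩ S).card with hdSdef
  have hP1 : ∑ v ∈ S, dS v = p := (Pp_card (r+1) (r+1)).symm
  have hsum1 : ∑ pr ∈ Pp G (r+1) (r+1), dS pr.1 = ∑ v ∈ S, dS v * dS v := by
    rw [Pp_sum_fst (r+1) dS]
  have hsum2 : ∑ pr ∈ Pp G (r+1) (r+1), dS pr.2 = ∑ v ∈ S, dS v * dS v := by
    rw [Pp_sum_snd, hsum1]
  have hle4 : ∑ pr ∈ Pp G (r+1) (r+1), (dS pr.1 + dS pr.2) ≤ 4 * p := by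
    have := Finset.sum_le_card_nsmul (Pp G (r+1) (r+1))
      (fun pr => dS pr.1 + dS pr.2) 4 ?_
    · rw [smul_eq_mul] at this
      rw [mul_comm] at this
      exact this
    · intro pr hpr'
      simp only [Pp, Finset.mem_filter, Finset.mem_univ, true_and] at hpr'
      exact key pr.1 pr.2 hpr'.1 hpr'.2.1 hpr'.2.2
  have hsq_sum : ∑ v ∈ S, dS v * dS v ≤ 2 * p := by
    rw [Finset.sum_add_distrib, hsum1, hsum2] at hle4
    omega
  have hcauchy : p * p ≤ k * (2 * p) := by
    have hCS := sq_sum_le_card_mul_sum_sq (s := S) (f := fun v => (dS v : ℤ))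
    have e1 : ((p : ℕ) : ℤ) = ∑ i ∈ S, (dS i : ℤ) := by
      rw [← hP1]; push_cast; rfl
    have e2 : ∑ i ∈ S, (dS i : ℤ) ^ 2 ≤ ((2 * p : ℕ) : ℤ) := by
      calc ∑ i ∈ S, (dS i : ℤ) ^ 2 = ((∑ v ∈ S, dS v * dS v : ℕ) : ℤ) := by
            push_cast
            exact Finset.sum_congr rfl fun i _ => pow_two _
        _ ≤ _ := by exact_mod_cast hsq_sum
    have h3' : ((p : ℕ) : ℤ) ^ 2 ≤ ((S.card : ℕ) : ℤ) * ((2 * p : ℕ) : ℤ) := by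
      calc ((p : ℕ) : ℤ) ^ 2 = (∑ i ∈ S, (dS i : ℤ)) ^ 2 := by rw [e1]
        _ ≤ (S.card : ℤ) * ∑ i ∈ S, (dS i : ℤ) ^ 2 := by exact_mod_cast hCS
        _ ≤ (S.card : ℤ) * ((2 * p : ℕ) : ℤ) :=
            mul_le_mul_of_nonneg_left e2 (by positivity)
    rw [pow_two] at h3'
    have h4' : p * p ≤ S.card * (2 * p) := by exact_mod_cast h3'
    rw [← hkdef] at h4'
    exact h4'
  have hp2k : p ≤ 2 * k := by
    have hmul : p * p ≤ (2 * k) * p := by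
      calc p * p ≤ k * (2 * p) := hcauchy
        _ = (2 * k) * p := by ring
    exact Nat.le_of_mul_le_mul_right hmul hp0
  have hqk : q ≤ k := by omega
  -- final contradiction via the tree at (u,v)
  obtain ⟨A, B, Ssum, h1, h2, h3, h4, h5⟩ := tree_lemma hg hdeg huv hu hv
  rw [Fintype.card_fin] at h3
  rw [← hSdef] at h2 h4
  rw [← hqdef] at h5
  have hA2 : A ≤ 2 := by
    have := key u v huv hu hv
    omega
  have hBge : 2 * r' ≤ B := by omega
  have hr1 : r - 1 = r' := by omega
  rw [hr1] at h5
  have hmono : 2 * (2 * r' * r') ≤ 2 * (B * r') :=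
    Nat.mul_le_mul_left 2 (Nat.mul_le_mul_right r' hBge)
  have hsq : r ^ 2 = r' * r' + 2 * r' + 1 := by rw [hrdef]; ring
  have hkle' : k ≤ r' * r' + 2 * r' + 3 := by omega
  have hq2s : q + 2 * Ssum + 4 ≤ 3 * k := by omega
  have hfinal : 4 * (r' * r') + 4 ≤ 3 * k := by
    calc 4 * (r' * r') + 4 = 2 * (2 * r' * r') + 4 := by ring
      _ ≤ 2 * (B * r') + 4 := by omega
      _ ≤ q + 2 * Ssum + 4 := by omega
      _ ≤ 3 * k := hq2s
  have hcontra : r' * r' ≤ 6 * r' + 5 := by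
    have h3k : 3 * k ≤ 3 * (r' * r') + 6 * r' + 9 := by omega
    omega
  have : 7 * r' ≤ r' * r' := Nat.mul_le_mul_right r' hr'
  omega
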